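/- Suppose additionally that N < kmax and that u satisfies (U1) and (U2). Let s = (s_1, s_2) be a strategy profile and t an integer such that either (i) (t, t+1) ∈ T, s_1(t) = o and s_2(t+1) = c, or (ii) (t+1, t) ∈ T, s_2(t) = o and s_1(t+1) = c (i.e., one player goes to the office at some arrival time while the other player goes to the canteen at the arrival time 10 minutes later). Then s is not Pareto optimal over T. -/

import Mathlib

/-- The two actions: `c` (canteen) and `o` (office). -/
inductive Act : Type
  | c : Act
  | o : Act
deriving DecidableEq

open Act

/-- The set of arrival pairs
`T = {(k, k+1) : kmin ≤ k ≤ kmax - 1} ∪ {(k, k-1) : kmin + 1 ≤ k ≤ kmax}`. -/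
noncomputable def T (kmin kmax : ℤ) : Finset (ℤ × ℤ) :=
  ((Finset.Icc kmin (kmax - 1)).image (fun k => (k, k + 1))) ∪
  ((Finset.Icc (kmin + 1) kmax).image (fun k => (k, k - 1)))

/-- Subgame `T1 = {(t1,t2) ∈ T : t1 ≡ kmin (mod 2)}`. -/
noncomputable def T1 (kmin kmax : ℤ) : Finset (ℤ × ℤ) :=
  (T kmin kmax).filter (fun t => t.1 % 2 = kmin % 2)

/-- Subgame `T2 = {(t1,t2) ∈ T : t2 ≡ kmin (mod 2)}`. -/
noncomputable def T2 (kmin kmax : ℤ) : Finset (ℤ × ℤ) :=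
  (T kmin kmax).filter (fun t => t.2 % 2 = kmin % 2)

/-- The expected utility of profile `s` over a set `S` of arrival pairs:
`EU_S(s) = (1/|S|) · Σ_{(t1,t2) ∈ S} u_{(t1,t2)}(s_1(t1), s_2(t2))`. -/
noncomputable def EU (u : ℤ × ℤ → Act → Act → ℝ) (s : (ℤ → Act) × (ℤ → Act))
    (S : Finset (ℤ × ℤ)) : ℝ :=
  (∑ t ∈ S, u t (s.1 t.1) (s.2 t.2)) / S.card

/-- `s` is Pareto optimal over `S` if no profile `s'` has `EU_S(s') > EU_S(s)`. -/
def ParetoOptimal (u : ℤ × ℤ → Act → Act → ℝ) (S : Finset (ℤ × ℤ))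
    (s : (ℤ → Act) × (ℤ → Act)) : Prop :=
  ¬ ∃ s' : (ℤ → Act) × (ℤ → Act), EU u s' S > EU u s S

/-- `u` satisfies conditions (U1) and (U2) on the arrival pairs of `T`. -/
def SatisfiesU1U2 (kmin kmax N : ℤ) (u : ℤ × ℤ → Act → Act → ℝ) : Prop :=
  ∀ t ∈ T kmin kmax,
    (t.1 < N ∧ t.2 < N →
      u t c c > u t o o ∧ u t o o > u t c o ∧ u t c o = u t o c) ∧
    (N ≤ t.1 ∨ N ≤ t.2 →
      u t o o > u t c o ∧ u t c o = u t o c ∧ u t o c = u t c c)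

/-- `u` is uniform with values `A > B > C` (the order is assumed separately). -/
def Uniform (kmin kmax N : ℤ) (u : ℤ × ℤ → Act → Act → ℝ) (A B C : ℝ) : Prop :=
  ∀ t ∈ T kmin kmax,
    (t.1 < N ∧ t.2 < N →
      u t c c = A ∧ u t o o = B ∧ u t c o = C ∧ u t o c = C) ∧
    (N ≤ t.1 ∨ N ≤ t.2 →
      u t o o = B ∧ u t c c = C ∧ u t c o = C ∧ u t o c = C)

/-- The cut-off strategy with cut-off `m`: canteen iff arriving strictly before `m`. -/
def cutoff (m : ℤ) : ℤ → Act := fun k => if k < m then c else o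

/-- The all-office strategy. -/
def allOffice : ℤ → Act := fun _ => o

lemma mem_T {kmin kmax : ℤ} {p : ℤ × ℤ} : p ∈ T kmin kmax ↔
    (kmin ≤ p.1 ∧ p.1 ≤ kmax - 1 ∧ p.2 = p.1 + 1) ∨
    (kmin + 1 ≤ p.1 ∧ p.1 ≤ kmax ∧ p.2 = p.1 - 1) := by
  obtain ⟨a, b⟩ := p
  simp only [T, Finset.mem_union, Finset.mem_image, Finset.mem_Icc, Prod.mk.injEq]
  constructor
  · rintro (⟨k, hk, rfl, rfl⟩ | ⟨k, hk, rfl, rfl⟩) <;> simp <;> omega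
  · rintro (⟨ha1, ha2, rfl⟩ | ⟨ha1, ha2, rfl⟩)
    · exact Or.inl ⟨a, ⟨ha1, ha2⟩, rfl, rfl⟩
    · exact Or.inr ⟨a, ⟨ha1, ha2⟩, rfl, rfl⟩

lemma umax {kmin kmax N : ℤ} {u : ℤ × ℤ → Act → Act → ℝ}
    (hu : SatisfiesU1U2 kmin kmax N u) {p : ℤ × ℤ} (hp : p ∈ T kmin kmax) (x y : Act) :
    (p.1 < N ∧ p.2 < N → u p x y ≤ u p c c) ∧
    ((N ≤ p.1 ∨ N ≤ p.2) → u p x y ≤ u p o o) := by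
  obtain ⟨h1, h2⟩ := hu p hp
  refine ⟨fun hr => ?_, fun hr => ?_⟩
  · obtain ⟨a1, a2, a3⟩ := h1 hr; cases x <;> cases y <;> linarith
  · obtain ⟨b1, b2, b3⟩ := h2 hr; cases x <;> cases y <;> linarith

lemma improve (kmin kmax : ℤ) (u : ℤ × ℤ → Act → Act → ℝ)
    (s s' : (ℤ → Act) × (ℤ → Act)) (p0 : ℤ × ℤ) (hp0 : p0 ∈ T kmin kmax)
    (hle : ∀ p ∈ T kmin kmax, u p (s.1 p.1) (s.2 p.2) ≤ u p (s'.1 p.1) (s'.2 p.2))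
    (hlt : u p0 (s.1 p0.1) (s.2 p0.2) < u p0 (s'.1 p0.1) (s'.2 p0.2)) :
    ¬ ParetoOptimal u (T kmin kmax) s := by
  intro hPO
  apply hPO
  refine ⟨s', ?_⟩
  have hcard : (0:ℝ) < ((T kmin kmax).card : ℝ) := by
    exact_mod_cast Finset.card_pos.mpr ⟨p0, hp0⟩
  have hsum : (∑ t ∈ T kmin kmax, u t (s.1 t.1) (s.2 t.2)) <
      (∑ t ∈ T kmin kmax, u t (s'.1 t.1) (s'.2 t.2)) :=
    Finset.sum_lt_sum hle ⟨p0, hp0, hlt⟩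
  show EU u s (T kmin kmax) < EU u s' (T kmin kmax)
  unfold EU
  gcongr

/-- If one player goes to the office at some arrival time while the other
player goes to the canteen at the arrival time 10 minutes later, then the profile is
not Pareto optimal over `T`. -/
theorem stmt_1 (kmin kmax N : ℤ) (h1 : kmin < N) (h2 : N ≤ kmax) (h3 : N < kmax)
    (u : ℤ × ℤ → Act → Act → ℝ) (hu : SatisfiesU1U2 kmin kmax N u)
    (s : (ℤ → Act) × (ℤ → Act))
    (h : ∃ t : ℤ,
      ((t, t + 1) ∈ T kmin kmax ∧ s.1 t = Act.o ∧ s.2 (t + 1) = Act.c) ∨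
      ((t + 1, t) ∈ T kmin kmax ∧ s.2 t = Act.o ∧ s.1 (t + 1) = Act.c)) :
    ¬ ParetoOptimal u (T kmin kmax) s := by
  obtain ⟨t, hcase⟩ := h
  rcases hcase with ⟨hmem, ho, hc⟩ | ⟨hmem, ho, hc⟩
  · -- case (i)
    rcases lt_or_ge (t + 1) N with hN | hN
    · -- low regime: switch the chain to canteen below t+1
      refine improve kmin kmax u s
        ⟨fun k => if k ≤ t ∧ k % 2 = t % 2 then c else s.1 k,
         fun k => if k ≤ t + 1 ∧ k % 2 = (t + 1) % 2 then c else s.2 k⟩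
        (t, t + 1) hmem ?_ ?_
      · intro p hp
        have hT := hp
        rw [mem_T] at hp
        obtain ⟨a, b⟩ := p
        dsimp only at hp ⊢
        have hab : b = a + 1 ∨ b = a - 1 := by omega
        by_cases hA : a ≤ t ∧ a % 2 = t % 2
        · rw [if_pos hA, if_pos (show b ≤ t + 1 ∧ b % 2 = (t + 1) % 2 by omega)]
          exact (umax hu hT _ _).1 ⟨by omega, by omega⟩
        · rw [if_neg hA]
          by_cases hB : b ≤ t + 1 ∧ b % 2 = (t + 1) % 2
          · have hb : b = t + 1 := by omega
            subst hb
            rw [if_pos hB, hc]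
          · rw [if_neg hB]
      · dsimp only
        rw [ho, hc, if_pos (show t ≤ t ∧ t % 2 = t % 2 from ⟨le_refl _, rfl⟩),
          if_pos (show t + 1 ≤ t + 1 ∧ (t + 1) % 2 = (t + 1) % 2 from ⟨le_refl _, rfl⟩)]
        obtain ⟨hU1, _⟩ := hu (t, t + 1) hmem
        obtain ⟨a1, a2, a3⟩ := hU1 ⟨by omega, by omega⟩
        linarith
    · -- high regime: switch the chain to office above t
      refine improve kmin kmax u s
        ⟨fun k => if t ≤ k ∧ k % 2 = t % 2 then o else s.1 k,
         fun k => if t + 1 ≤ k ∧ k % 2 = (t + 1) % 2 then o else s.2 k⟩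
        (t, t + 1) hmem ?_ ?_
      · intro p hp
        have hT := hp
        rw [mem_T] at hp
        obtain ⟨a, b⟩ := p
        dsimp only at hp ⊢
        have hab : b = a + 1 ∨ b = a - 1 := by omega
        by_cases hA : t ≤ a ∧ a % 2 = t % 2
        · rcases hab with rfl | rfl
          · rw [if_pos hA, if_pos (show t + 1 ≤ a + 1 ∧ (a + 1) % 2 = (t + 1) % 2 by omega)]
            exact (umax hu hT _ _).2 (Or.inr (by omega))
          · by_cases ha : a = t
            · rw [if_pos hA,
                if_neg (show ¬(t + 1 ≤ a - 1 ∧ (a - 1) % 2 = (t + 1) % 2) by omega), ha, ho]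
            · rw [if_pos hA, if_pos (show t + 1 ≤ a - 1 ∧ (a - 1) % 2 = (t + 1) % 2 by omega)]
              exact (umax hu hT _ _).2 (Or.inl (by omega))
        · rw [if_neg hA]
          by_cases hB : t + 1 ≤ b ∧ b % 2 = (t + 1) % 2
          · exact absurd (show t ≤ a ∧ a % 2 = t % 2 by omega) hA
          · rw [if_neg hB]
      · dsimp only
        rw [ho, hc, if_pos (show t ≤ t ∧ t % 2 = t % 2 from ⟨le_refl _, rfl⟩),
          if_pos (show t + 1 ≤ t + 1 ∧ (t + 1) % 2 = (t + 1) % 2 from ⟨le_refl _, rfl⟩)]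
        obtain ⟨_, hU2⟩ := hu (t, t + 1) hmem
        obtain ⟨b1, b2, b3⟩ := hU2 (Or.inr hN)
        linarith
  · -- case (ii)
    rcases lt_or_ge (t + 1) N with hN | hN
    · refine improve kmin kmax u s
        ⟨fun k => if k ≤ t + 1 ∧ k % 2 = (t + 1) % 2 then c else s.1 k,
         fun k => if k ≤ t ∧ k % 2 = t % 2 then c else s.2 k⟩
        (t + 1, t) hmem ?_ ?_
      · intro p hp
        have hT := hp
        rw [mem_T] at hp
        obtain ⟨a, b⟩ := p
        dsimp only at hp ⊢
        have hab : b = a + 1 ∨ b = a - 1 := by omega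
        by_cases hB : b ≤ t ∧ b % 2 = t % 2
        · rw [if_pos hB, if_pos (show a ≤ t + 1 ∧ a % 2 = (t + 1) % 2 by omega)]
          exact (umax hu hT _ _).1 ⟨by omega, by omega⟩
        · rw [if_neg hB]
          by_cases hA : a ≤ t + 1 ∧ a % 2 = (t + 1) % 2
          · have ha : a = t + 1 := by omega
            subst ha
            rw [if_pos hA, hc]
          · rw [if_neg hA]
      · dsimp only
        rw [ho, hc, if_pos (show t + 1 ≤ t + 1 ∧ (t + 1) % 2 = (t + 1) % 2 from ⟨le_refl _, rfl⟩),
          if_pos (show t ≤ t ∧ t % 2 = t % 2 from ⟨le_refl _, rfl⟩)]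
        obtain ⟨hU1, _⟩ := hu (t + 1, t) hmem
        obtain ⟨a1, a2, a3⟩ := hU1 ⟨by omega, by omega⟩
        linarith
    · refine improve kmin kmax u s
        ⟨fun k => if t + 1 ≤ k ∧ k % 2 = (t + 1) % 2 then o else s.1 k,
         fun k => if t ≤ k ∧ k % 2 = t % 2 then o else s.2 k⟩
        (t + 1, t) hmem ?_ ?_
      · intro p hp
        have hT := hp
        rw [mem_T] at hp
        obtain ⟨a, b⟩ := p
        dsimp only at hp ⊢
        have hab : b = a + 1 ∨ b = a - 1 := by omega
        by_cases hB : t ≤ b ∧ b % 2 = t % 2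
        · rcases hab with rfl | rfl
          · by_cases hb : a + 1 = t
            · rw [if_pos hB, hb, ho, if_neg (show ¬(t + 1 ≤ a ∧ a % 2 = (t + 1) % 2) by omega)]
            · rw [if_pos hB, if_pos (show t + 1 ≤ a ∧ a % 2 = (t + 1) % 2 by omega)]
              exact (umax hu hT _ _).2 (Or.inr (by omega))
          · rw [if_pos hB, if_pos (show t + 1 ≤ a ∧ a % 2 = (t + 1) % 2 by omega)]
            exact (umax hu hT _ _).2 (Or.inl (by omega))
        · rw [if_neg hB]
          by_cases hA : t + 1 ≤ a ∧ a % 2 = (t + 1) % 2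
          · exact absurd (show t ≤ b ∧ b % 2 = t % 2 by omega) hB
          · rw [if_neg hA]
      · dsimp only
        rw [ho, hc, if_pos (show t + 1 ≤ t + 1 ∧ (t + 1) % 2 = (t + 1) % 2 from ⟨le_refl _, rfl⟩),
          if_pos (show t ≤ t ∧ t % 2 = t % 2 from ⟨le_refl _, rfl⟩)]
        obtain ⟨_, hU2⟩ := hu (t + 1, t) hmem
        obtain ⟨b1, b2, b3⟩ := hU2 (Or.inl hN)
        linarith
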